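/- arXiv:0805.3038 — 8 statements merged into one kernel-verified Lean document; each statement's English description precedes it below -/
import Mathlib

section
/- Let Λ be a free abelian group of finite rank, X a proper positive subset of Λ (X ≠ Λ), Γ an Archimedean linearly ordered abelian group, and φ : Λ → Γ a group homomorphism. Write X⁺ = X \ (−X), Pos(φ) = {λ : φ(λ) ≥ 0}, and Pos⁺(φ) = {λ : φ(λ) > 0}. Then the following are equivalent: (1) X ⊆ Pos(φ); (2) X⁺ ⊆ Pos(φ); (3) Pos⁺(φ) ⊆ X⁺; (4) Pos⁺(φ) ⊆ X. -/
open Pointwise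

def IsPositiveSubset {Λ : Type*} [AddCommGroup Λ] (X : Set Λ) : Prop :=
  X ∪ (-X) = Set.univ ∧ X + X ⊆ X ∧ ∃ H : AddSubgroup Λ, (H : Set Λ) = X ∩ (-X)

private lemma arch_zero {Γ : Type*} [AddCommGroup Γ] [LinearOrder Γ] [IsOrderedAddMonoid Γ] [Archimedean Γ]
    {a b : Γ} (h : ∀ n : ℤ, 0 ≤ a + n • b) : b = 0 := by
  by_contra hb
  rcases lt_or_gt_of_ne hb with hb | hb
  · obtain ⟨n, hn⟩ := Archimedean.arch a (neg_pos.2 hb)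
    have h' := h (n + 1)
    rw [add_zsmul, one_zsmul, natCast_zsmul] at h'
    rw [smul_neg] at hn
    have h1 : a + (n • b + b) ≤ b := by
      calc a + (n • b + b) ≤ -(n • b) + (n • b + b) := add_le_add_left hn _
        _ = b := by abel
    exact absurd (h'.trans h1) (not_le.2 hb)
  · obtain ⟨n, hn⟩ := Archimedean.arch a hb
    have h' := h (-(n + 1))
    rw [neg_zsmul, add_zsmul, one_zsmul, natCast_zsmul] at h'
    have h1 : a + -(n • b + b) ≤ -b := by
      calc a + -(n • b + b) ≤ n • b + -(n • b + b) := add_le_add_left hn _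
        _ = -b := by abel
    exact absurd (h'.trans h1) (not_le.2 (neg_lt_zero.2 hb))

theorem tfae_separating {Λ Γ : Type*} [AddCommGroup Λ]
    [Module.Free ℤ Λ] [Module.Finite ℤ Λ]
    [AddCommGroup Γ] [LinearOrder Γ] [IsOrderedAddMonoid Γ] [Archimedean Γ]
    (X : Set Λ) (hX : IsPositiveSubset X) (hXproper : X ≠ Set.univ)
    (φ : Λ →+ Γ) :
    [X ⊆ {l : Λ | 0 ≤ φ l},
     X \ (-X) ⊆ {l : Λ | 0 ≤ φ l},
     {l : Λ | 0 < φ l} ⊆ X \ (-X),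
     {l : Λ | 0 < φ l} ⊆ X].TFAE := by
  obtain ⟨hunion, hadd, H, hH⟩ := hX
  -- H = X ∩ (-X) is closed under ℤ-scalar multiplication and negation
  have hHsmul : ∀ h ∈ X ∩ (-X), ∀ n : ℤ, n • h ∈ X ∩ (-X) := by
    intro h hh n
    rw [← hH] at hh ⊢
    exact zsmul_mem hh n
  have hHneg : ∀ h ∈ X ∩ (-X), -h ∈ X ∩ (-X) := by
    intro h hh
    rw [← hH] at hh ⊢
    exact neg_mem hh
  -- union: every element is in X or -X
  have hmem : ∀ l : Λ, l ∈ X ∨ l ∈ (-X) := by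
    intro l
    have : l ∈ X ∪ (-X) := hunion ▸ Set.mem_univ l
    exact this
  -- X⁺ is nonempty
  obtain ⟨x₀, hx₀⟩ : ∃ x, x ∈ X \ (-X) := by
    obtain ⟨l, hl⟩ : ∃ l, l ∉ X := by
      by_contra hc
      push_neg at hc
      exact hXproper (Set.eq_univ_of_forall hc)
    have hl' : l ∈ (-X) := (hmem l).resolve_left hl
    refine ⟨-l, Set.mem_neg.1 hl', fun hc => hl ?_⟩
    simpa using Set.mem_neg.1 hc
  -- X⁺ is stable under translation by H
  have lemA : ∀ x ∈ X \ (-X), ∀ h ∈ X ∩ (-X), x + h ∈ X \ (-X) := by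
    intro x hx h hh
    refine ⟨hadd (Set.add_mem_add hx.1 hh.1), fun hc => hx.2 ?_⟩
    have h1 : -(x + h) ∈ X := Set.mem_neg.1 hc
    have h2 : -(x + h) + h ∈ X := hadd (Set.add_mem_add h1 hh.1)
    have : -(x + h) + h = -x := by abel
    rw [this] at h2
    exact Set.mem_neg.2 h2
  tfae_have 1 → 2 := fun h1 l hl => h1 hl.1
  tfae_have 2 → 3 := by
    intro h2
    have hker : ∀ h ∈ X ∩ (-X), φ h = 0 := by
      intro h hh
      apply arch_zero (a := φ x₀)
      intro n
      have := h2 (lemA x₀ hx₀ (n • h) (hHsmul h hh n))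
      simpa [map_zsmul] using this
    intro l hl
    simp only [Set.mem_setOf_eq] at hl
    have hlnot : l ∉ (-X) := by
      intro hneg
      have hnl : -l ∈ X := Set.mem_neg.1 hneg
      rcases hmem (-l) with _ | hc
      · rcases Classical.em ((-l) ∈ (-X)) with hc2 | hc2
        · have h0 := hker (-l) ⟨hnl, hc2⟩
          rw [map_neg, neg_eq_zero] at h0
          rw [h0] at hl
          exact lt_irrefl 0 hl
        · have h0 := h2 ⟨hnl, hc2⟩
          simp only [Set.mem_setOf_eq, map_neg, neg_nonneg] at h0
          exact absurd hl (not_lt.2 h0)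
      · have := hker (-l) ⟨hnl, hc⟩
        simp only [map_neg, neg_eq_zero] at this
        rw [this] at hl
        exact lt_irrefl 0 hl
    exact ⟨(hmem l).resolve_right hlnot, hlnot⟩
  tfae_have 3 → 4 := fun h3 l hl => (h3 hl).1
  tfae_have 4 → 1 := by
    intro h4
    obtain ⟨l₀, hl₀⟩ : ∃ l, l ∉ X := by
      by_contra hc
      push_neg at hc
      exact hXproper (Set.eq_univ_of_forall hc)
    have claim : ∀ h ∈ X ∩ (-X), ¬ (φ h < 0) := by
      intro h hh hneg
      obtain ⟨n, hn⟩ := Archimedean.arch (-φ l₀) (neg_pos.2 hneg)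
      have hpos : 0 < φ (l₀ - (n + 1 : ℤ) • h) := by
        rw [map_sub, map_zsmul]
        rw [smul_neg] at hn
        have heq : ((n : ℤ) + 1) • φ h = (n : ℤ) • φ h + φ h := by
          rw [add_zsmul, one_zsmul]
        rw [heq, natCast_zsmul]
        have h1 : n • φ h ≤ φ l₀ := by rwa [neg_le_neg_iff] at hn
        calc 0 < -φ h := neg_pos.2 hneg
          _ = φ l₀ - (φ l₀ + φ h) := by abel
          _ ≤ φ l₀ - (n • φ h + φ h) := sub_le_sub_left (add_le_add_left h1 (φ h)) _
      have hmem1 : l₀ - (n + 1 : ℤ) • h ∈ X := h4 hpos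
      have hmem2 : (n + 1 : ℤ) • h ∈ X := (hHsmul h hh _).1
      have : l₀ ∈ X := by
        have := hadd (Set.add_mem_add hmem1 hmem2)
        simpa using this
      exact hl₀ this
    have hker : ∀ h ∈ X ∩ (-X), φ h = 0 := by
      intro h hh
      have h1 := claim h hh
      have h2 := claim (-h) (hHneg h hh)
      simp only [map_neg, not_lt, neg_nonneg] at h1 h2
      exact le_antisymm h2 h1
    intro x hx
    simp only [Set.mem_setOf_eq]
    by_contra hc
    push_neg at hc
    have hpos : 0 < φ (-x) := by simpa using neg_pos.2 hc
    have hnx : -x ∈ X := h4 hpos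
    have : x ∈ X ∩ (-X) := ⟨hx, Set.mem_neg.2 (by simpa using hnx)⟩
    exact absurd (hker x this) (ne_of_lt hc)
  tfae_finish
end

section
/- Let Λ be a free abelian group of finite rank, λ₁, …, λ_n ∈ Λ, and suppose there exist strictly positive real numbers t₁, …, t_n with t₁·λ₁ + ⋯ + t_n·λ_n = 0 in ℝ ⊗_ℤ Λ. Then there exist positive integers r₁, …, r_n with r₁·λ₁ + ⋯ + r_n·λ_n = 0 in Λ. -/
open scoped TensorProduct
set_option maxHeartbeats 1000000
set_option synthInstance.maxHeartbeats 400000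

-- auxiliary: the linear map attached to a rational matrix
noncomputable def matLin {ι : Type*} [Fintype ι] (n : ℕ) (A : ι → Fin n → ℚ) :
    (Fin n → ℚ) →ₗ[ℚ] (ι → ℚ) where
  toFun v := fun j => ∑ i, A j i * v i
  map_add' x y := by
    funext j
    simp [mul_add, Finset.sum_add_distrib]
  map_smul' c x := by
    funext j
    simp [Finset.mul_sum, mul_left_comm]

lemma span_ker {ι : Type*} [Fintype ι] (n : ℕ) (A : ι → Fin n → ℚ) (t : Fin n → ℝ)
    (ht : ∀ j, ∑ i, (A j i : ℝ) * t i = 0) :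
    t ∈ Submodule.span ℝ ((fun v : Fin n → ℚ => fun i => ((v i : ℝ))) ''
      {v | ∀ j, ∑ i, A j i * v i = 0}) := by
  classical
  set ψ := matLin n A with hψ
  let e1 := TensorProduct.piScalarRight ℚ ℝ ℝ (Fin n)
  let e2 := TensorProduct.piScalarRight ℚ ℝ ℝ ι
  set F := TensorProduct.AlgebraTensorModule.lTensor ℝ ℝ ψ with hF
  -- commuting square
  have comm : ∀ y : ℝ ⊗[ℚ] (Fin n → ℚ), ∀ j,
      e2 (F y) j = ∑ i, (A j i : ℝ) * (e1 y i) := by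
    intro y
    induction y using TensorProduct.induction_on with
    | zero => simp
    | tmul c v =>
        intro j
        simp only [hF, TensorProduct.AlgebraTensorModule.lTensor_tmul]
        simp only [e1, e2, TensorProduct.piScalarRight_apply,
          TensorProduct.piScalarRightHom_tmul]
        simp only [hψ, matLin, LinearMap.coe_mk, AddHom.coe_mk, smul_eq_mul]
        rw [Finset.sum_smul]
        refine Finset.sum_congr rfl fun i _ => ?_
        rw [Rat.smul_def, Rat.smul_def]
        push_cast
        ring
    | add y z hy hz =>
        intro j
        simp [map_add, hy, hz, Finset.sum_add_distrib, mul_add]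
  set x := e1.symm t with hx
  have hxker : F x = 0 := by
    apply e2.injective
    rw [map_zero]
    funext j
    rw [comm x j]
    simp only [hx, LinearEquiv.apply_symm_apply]
    exact ht j
  have hflat : LinearMap.ker F = LinearMap.range
      (TensorProduct.AlgebraTensorModule.lTensor ℝ ℝ (LinearMap.ker ψ).subtype) :=
    Module.Flat.ker_lTensor_eq ℝ ℝ ψ
  have : x ∈ LinearMap.range
      (TensorProduct.AlgebraTensorModule.lTensor ℝ ℝ (LinearMap.ker ψ).subtype) := by
    rw [← hflat]; exact LinearMap.mem_ker.mpr hxker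
  obtain ⟨z, hz⟩ := this
  have main : ∀ z : ℝ ⊗[ℚ] (LinearMap.ker ψ),
      e1 (TensorProduct.AlgebraTensorModule.lTensor ℝ ℝ (LinearMap.ker ψ).subtype z) ∈
      Submodule.span ℝ ((fun v : Fin n → ℚ =>
        fun i => ((v i : ℝ))) '' {v | ∀ j, ∑ i, A j i * v i = 0}) := by
    intro z
    induction z using TensorProduct.induction_on with
    | zero =>
        rw [map_zero, map_zero]
        exact Submodule.zero_mem _
    | tmul c v =>
        simp only [TensorProduct.AlgebraTensorModule.lTensor_tmul]
        have : e1 (c ⊗ₜ[ℚ] ((LinearMap.ker ψ).subtype v)) =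
            c • (fun i => ((v.1 i : ℝ))) := by
          funext i
          simp [e1, TensorProduct.piScalarRightHom_tmul, Rat.smul_def, mul_comm]
        rw [this]
        refine Submodule.smul_mem _ _ (Submodule.subset_span ?_)
        refine ⟨v.1, ?_, rfl⟩
        have hv := v.2
        rw [LinearMap.mem_ker] at hv
        intro j
        exact congrFun hv j
    | add y z hy hz => rw [map_add, map_add]; exact Submodule.add_mem _ hy hz
  have := main z
  rw [hz, hx, LinearEquiv.apply_symm_apply] at this
  exact this

lemma rat_point_aux {ι : Type*} [Fintype ι] (n : ℕ) (A : ι → Fin n → ℚ) (t : Fin n → ℝ)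
    (ht : ∀ i, 0 < t i)
    (hsp : t ∈ Submodule.span ℝ ((fun v : Fin n → ℚ => fun i => ((v i : ℝ))) ''
      {v | ∀ j, ∑ i, A j i * v i = 0})) :
    ∃ v : Fin n → ℚ, (∀ i, 0 < v i) ∧ ∀ j, ∑ i, A j i * v i = 0 := by
  classical
  rw [Submodule.mem_span_set'] at hsp
  obtain ⟨m, f, g, hg⟩ := hsp
  choose w hwS hwe using fun k => (g k).2
  set G : (Fin m → ℝ) → Fin n → ℝ := fun c i => ∑ k, c k * ((w k i : ℝ)) with hG
  have hGf : G f = t := by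
    funext i
    rw [← hg]
    simp only [hG, Finset.sum_apply, Pi.smul_apply, smul_eq_mul]
    refine Finset.sum_congr rfl fun k _ => ?_
    rw [← hwe k]
  have hGcont : Continuous G := by
    refine continuous_pi fun i => continuous_finset_sum _ fun k _ => ?_
    exact (continuous_apply k).mul continuous_const
  have hUopen : IsOpen {x : Fin n → ℝ | ∀ i, 0 < x i} := by
    have : {x : Fin n → ℝ | ∀ i, 0 < x i} = ⋂ i, {x | 0 < x i} := by
      ext x; simp
    rw [this]
    exact isOpen_iInter_of_finite fun i => isOpen_lt continuous_const (continuous_apply i)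
  have hmem : f ∈ G ⁻¹' {x : Fin n → ℝ | ∀ i, 0 < x i} := by
    simp only [Set.mem_preimage, hGf]; exact ht
  obtain ⟨δ, hδ, hball⟩ := Metric.isOpen_iff.mp (hUopen.preimage hGcont) f hmem
  choose q hq using fun k => exists_rat_near (f k) hδ
  have hqball : (fun k => (q k : ℝ)) ∈ Metric.ball f δ := by
    rw [Metric.mem_ball, dist_pi_lt_iff hδ]
    intro k
    rw [Real.dist_eq, abs_sub_comm]
    exact hq k
  have hqU := hball hqball
  refine ⟨fun i => ∑ k, q k * w k i, ?_, ?_⟩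
  · intro i
    have : (0 : ℝ) < ((∑ k, q k * w k i : ℚ) : ℝ) := by
      push_cast
      exact hqU i
    exact_mod_cast this
  · intro j
    have step : (∑ i, A j i * ∑ k, q k * w k i) = ∑ k, q k * ∑ i, A j i * w k i := by
      simp only [Finset.mul_sum]
      rw [Finset.sum_comm]
      exact Finset.sum_congr rfl fun k _ => Finset.sum_congr rfl fun i _ => by ring
    rw [step]
    exact Finset.sum_eq_zero fun k _ => by rw [hwS k j, mul_zero]

theorem rational_solutions {Λ : Type*} [AddCommGroup Λ]
    [Module.Free ℤ Λ] [Module.Finite ℤ Λ]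
    (n : ℕ) (l : Fin n → Λ) (t : Fin n → ℝ) (ht : ∀ i, 0 < t i)
    (h : ∑ i, t i • ((1 : ℝ) ⊗ₜ[ℤ] l i : ℝ ⊗[ℤ] Λ) = 0) :
    ∃ r : Fin n → ℕ, (∀ i, 0 < r i) ∧ ∑ i, (r i : ℤ) • l i = 0 := by
  classical
  set b := Module.Free.chooseBasis ℤ Λ with hb
  set A : Module.Free.ChooseBasisIndex ℤ Λ → Fin n → ℚ :=
    fun j i => ((b.repr (l i) j : ℤ) : ℚ) with hA
  have h1 : ∀ j, ∑ i, ((A j i : ℝ)) * t i = 0 := by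
    intro j
    have h0 := congrArg (fun x => ((b.baseChange ℝ).repr x) j) h
    simp only [map_sum, map_smul, Finsupp.coe_finset_sum, Finset.sum_apply,
      Finsupp.coe_smul, Pi.smul_apply, Module.Basis.baseChange_repr_tmul, smul_eq_mul,
      Finsupp.coe_zero, Pi.zero_apply, map_zero] at h0
    rw [← h0]
    refine Finset.sum_congr rfl fun i _ => ?_
    simp only [hA, zsmul_eq_mul, mul_one]
    push_cast
    ring
  obtain ⟨v, hv, hker⟩ := rat_point_aux n A t ht (span_ker n A t h1)
  -- clear denominators
  set d : ℕ := ∏ i, (v i).den with hd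
  have hdpos : 0 < d := Finset.prod_pos fun i _ => (v i).pos
  have hdvd : ∀ i, (v i).den ∣ d := fun i => Finset.dvd_prod_of_mem _ (Finset.mem_univ i)
  set r : Fin n → ℕ := fun i => (v i).num.toNat * (d / (v i).den) with hr
  have hrq : ∀ i, ((r i : ℤ) : ℚ) = v i * d := by
    intro i
    have hden : ((v i).den : ℚ) ≠ 0 := Nat.cast_ne_zero.mpr (v i).den_nz
    have hnum : (v i) * (v i).den = ((v i).num : ℚ) := Rat.mul_den_eq_num (v i)
    have hcast : ((((v i).num.toNat : ℤ)) : ℚ) = ((v i).num : ℚ) := by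
      rw [Int.toNat_of_nonneg (le_of_lt (Rat.num_pos.mpr (hv i)))]
    have hdc : ((v i).den : ℚ) * ((d / (v i).den : ℕ) : ℚ) = (d : ℚ) := by
      rw [← Nat.cast_mul, Nat.mul_div_cancel' (hdvd i)]
    have hcast' : (((v i).num.toNat : ℕ) : ℚ) = ((v i).num : ℚ) := by exact_mod_cast hcast
    calc ((r i : ℤ) : ℚ) = ((v i).num : ℚ) * ((d / (v i).den : ℕ) : ℚ) := by
            simp only [hr, Nat.cast_mul, Int.cast_mul, Int.cast_natCast, hcast']
      _ = (v i * (v i).den) * ((d / (v i).den : ℕ) : ℚ) := by rw [hnum]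
      _ = v i * (((v i).den : ℚ) * ((d / (v i).den : ℕ) : ℚ)) := by ring
      _ = v i * d := by rw [hdc]
  refine ⟨r, ?_, ?_⟩
  · intro i
    refine Nat.mul_pos ?_ (Nat.div_pos (Nat.le_of_dvd hdpos (hdvd i)) (v i).pos)
    have hnp := Rat.num_pos.mpr (hv i)
    omega
  · apply b.repr.injective
    rw [map_sum, map_zero]
    ext j
    rw [Finsupp.finset_sum_apply]
    simp only [map_smul, Finsupp.smul_apply, smul_eq_mul, Finsupp.coe_zero, Pi.zero_apply]
    have key : ((∑ i, (r i : ℤ) * (b.repr (l i)) j : ℤ) : ℚ) = (∑ i, A j i * v i) * d := by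
      push_cast
      rw [Finset.sum_mul]
      refine Finset.sum_congr rfl fun i _ => ?_
      have := hrq i
      push_cast at this
      rw [this]
      simp only [hA]
      ring
    rw [hker j, zero_mul] at key
    exact_mod_cast key
end

section
/- Let Λ be a free abelian group of finite rank, V = ℝ ⊗_ℤ Λ, and X a positive subset of Λ with X ≠ Λ. Then there exists a nonzero ℝ-linear form φ on V such that X ⊆ {λ ∈ Λ : φ(λ) ≥ 0}. -/
open Pointwise
open scoped TensorProduct

section Aux

variable {Λ : Type*} [AddCommGroup Λ]

lemma nsmul_mem_posSet {X : Set Λ} (h0 : (0 : Λ) ∈ X)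
    (hadd : ∀ a ∈ X, ∀ b ∈ X, a + b ∈ X) :
    ∀ (n : ℕ) (l : Λ), l ∈ X → n • l ∈ X := by
  intro n l hl
  induction n with
  | zero => simpa using h0
  | succ m ih =>
    rw [succ_nsmul]
    exact hadd _ ih _ hl

lemma sum_mem_posSet {X : Set Λ} (h0 : (0 : Λ) ∈ X)
    (hadd : ∀ a ∈ X, ∀ b ∈ X, a + b ∈ X)
    {α : Type*} (t : Finset α) (g : α → Λ) (hg : ∀ a ∈ t, g a ∈ X) :
    (∑ a ∈ t, g a) ∈ X := by
  refine Finset.sum_induction g (· ∈ X) (fun a b ha hb => hadd a ha b hb) h0 hg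

/-- Key lemma: if `l0` has no positive multiple in `X`, then `f l0` is not in the
`ℝ≥0`-span of `f '' X`, where `f` is an additive embedding with discrete image. -/
lemma key_not_mem_span {E : Type*} [NormedAddCommGroup E] [NormedSpace ℝ E]
    {X : Set Λ} (h0 : (0 : Λ) ∈ X) (hadd : ∀ a ∈ X, ∀ b ∈ X, a + b ∈ X)
    {l0 : Λ} (hnot : ∀ n : ℕ, 1 ≤ n → n • l0 ∉ X)
    (f : Λ →+ E) (hdisc : ∀ μ : Λ, μ ≠ 0 → 1 ≤ ‖f μ‖) :
    f l0 ∉ (Submodule.span {c : ℝ // 0 ≤ c} (⇑f '' X) : Set E) := by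
  classical
  intro hv
  rw [SetLike.mem_coe, Submodule.mem_span_set] at hv
  obtain ⟨c, hsupp, hsum⟩ := hv
  set s := c.support with hs
  have hex : ∀ x ∈ s, ∃ l, l ∈ X ∧ f l = x := by
    intro x hx
    have := hsupp hx
    rwa [Set.mem_image] at this
  choose! L hLX hLf using hex
  set r : E → ℝ := fun x => (c x : ℝ) with hr
  have hr0 : ∀ x, 0 ≤ r x := fun x => (c x).2
  have hsum' : ∑ x ∈ s, r x • x = f l0 := by
    rw [← hsum, Finsupp.sum]
    exact Finset.sum_congr rfl fun x _ => Nonneg.coe_smul (c x) x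
  set K : ℝ := ∑ x ∈ s, ‖x‖ with hK
  set M : ℕ := ⌈K⌉₊ + 1 with hM
  have hKM : K < M := by
    calc K ≤ (⌈K⌉₊ : ℝ) := Nat.le_ceil K
    _ < M := by exact_mod_cast Nat.lt_succ_self _
  have hM0 : (0 : ℝ) < M := by positivity
  have hM1 : (1 : ℝ) ≤ M := by
    have : (1 : ℕ) ≤ M := by omega
    exact_mod_cast this
  -- the box function for pigeonhole
  have hbox : ∀ (N : ℕ) (x : E), (⌊Int.fract ((N : ℝ) * r x) * M⌋).toNat < M := by
    intro N x
    have h1 : Int.fract ((N : ℝ) * r x) * M < M := by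
      have := Int.fract_lt_one ((N : ℝ) * r x)
      nlinarith
    have h2 : ⌊Int.fract ((N : ℝ) * r x) * M⌋ < (M : ℤ) := by
      apply Int.floor_lt.2
      exact_mod_cast h1
    exact (Int.toNat_lt' (by omega)).2 h2
  set box : ℕ → (s → Fin M) := fun N x => ⟨(⌊Int.fract ((N : ℝ) * r x.1) * M⌋).toNat,
    hbox N x.1⟩ with hboxdef
  obtain ⟨N₁, hN₁, N₂, hN₂, hne, heq⟩ :=
    Finset.exists_ne_map_eq_of_card_lt_of_maps_to
      (s := Finset.range (M ^ s.card + 1)) (t := (Finset.univ : Finset (s → Fin M)))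
      (by
        rw [Finset.card_range, Finset.card_univ, Fintype.card_fun, Fintype.card_fin,
          Fintype.card_coe]
        exact Nat.lt_succ_self _)
      (fun a _ => Finset.mem_univ (box a))
  clear hN₁ hN₂
  wlog hlt : N₁ < N₂ generalizing N₁ N₂
  · exact this N₂ N₁ hne.symm heq.symm (hne.lt_or_gt.resolve_left hlt)
  set N : ℕ := N₂ - N₁ with hNdef
  have hN1 : 1 ≤ N := by omega
  have hNcast : (N : ℝ) = (N₂ : ℝ) - (N₁ : ℝ) := by
    rw [hNdef]
    push_cast [Nat.cast_sub hlt.le]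
    ring
  set q : E → ℤ := fun x => ⌊(N₂ : ℝ) * r x⌋ - ⌊(N₁ : ℝ) * r x⌋ with hq
  have hfloor_eq : ∀ x : E, ∀ hx : x ∈ s,
      ⌊Int.fract ((N₁ : ℝ) * r x) * M⌋ = ⌊Int.fract ((N₂ : ℝ) * r x) * M⌋ := by
    intro x hx
    have := congrFun heq ⟨x, hx⟩
    rw [hboxdef] at this
    simp only [Fin.mk.injEq] at this
    have h1 : (0 : ℤ) ≤ ⌊Int.fract ((N₁ : ℝ) * r x) * M⌋ :=
      Int.floor_nonneg.2 (mul_nonneg (Int.fract_nonneg _) hM0.le)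
    have h2 : (0 : ℤ) ≤ ⌊Int.fract ((N₂ : ℝ) * r x) * M⌋ :=
      Int.floor_nonneg.2 (mul_nonneg (Int.fract_nonneg _) hM0.le)
    omega
  have hest : ∀ x ∈ s, |(N : ℝ) * r x - (q x : ℝ)| < 1 / M := by
    intro x hx
    have h1 : |Int.fract ((N₂ : ℝ) * r x) * M - Int.fract ((N₁ : ℝ) * r x) * M| < 1 :=
      Int.abs_sub_lt_one_of_floor_eq_floor (hfloor_eq x hx).symm
    have h2 : |Int.fract ((N₂ : ℝ) * r x) - Int.fract ((N₁ : ℝ) * r x)| * M < 1 := by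
      calc |Int.fract ((N₂ : ℝ) * r x) - Int.fract ((N₁ : ℝ) * r x)| * M
          = |(Int.fract ((N₂ : ℝ) * r x) - Int.fract ((N₁ : ℝ) * r x)) * M| := by
            rw [abs_mul, abs_of_pos hM0]
        _ = |Int.fract ((N₂ : ℝ) * r x) * M - Int.fract ((N₁ : ℝ) * r x) * M| := by
            ring_nf
        _ < 1 := h1
    have heq2 : (N : ℝ) * r x - (q x : ℝ)
        = Int.fract ((N₂ : ℝ) * r x) - Int.fract ((N₁ : ℝ) * r x) := by
      rw [hNcast, hq]
      push_cast
      rw [← Int.self_sub_floor, ← Int.self_sub_floor]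
      ring
    rw [heq2, lt_div_iff₀ hM0]
    exact h2
  have hq0 : ∀ x ∈ s, 0 ≤ q x := by
    intro x hx
    have h1 := hest x hx
    have h2 : (0 : ℝ) ≤ (N : ℝ) * r x := mul_nonneg (Nat.cast_nonneg N) (hr0 x)
    have h3 : (1 : ℝ) / M ≤ 1 := by
      rw [div_le_one hM0]; exact hM1
    have h4 : (-1 : ℝ) < (q x : ℝ) := by
      have := abs_lt.1 h1
      linarith [this.2]
    have h5 : (-1 : ℤ) < q x := by exact_mod_cast h4
    omega
  -- the lattice element witnessing the approximation
  set mu : Λ := N • l0 - ∑ x ∈ s, (q x).toNat • L x with hmu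
  have hfmu : f mu = ∑ x ∈ s, ((N : ℝ) * r x - (q x : ℝ)) • x := by
    rw [hmu, map_sub, map_nsmul, map_sum]
    have h1 : (N : ℕ) • f l0 = ∑ x ∈ s, ((N : ℝ) * r x) • x := by
      rw [← hsum', Finset.smul_sum]
      refine Finset.sum_congr rfl fun x _ => ?_
      rw [← Nat.cast_smul_eq_nsmul ℝ, smul_smul]
    have h2 : ∀ x ∈ s, f ((q x).toNat • L x) = (q x : ℝ) • x := by
      intro x hx
      rw [map_nsmul, hLf x hx, ← Nat.cast_smul_eq_nsmul ℝ]
      congr 1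
      exact_mod_cast congrArg (fun z : ℤ => (z : ℝ)) (Int.toNat_of_nonneg (hq0 x hx))
    rw [h1, Finset.sum_congr rfl h2, ← Finset.sum_sub_distrib]
    refine Finset.sum_congr rfl fun x _ => ?_
    rw [sub_smul]
  have hnorm : ‖f mu‖ < 1 := by
    calc ‖f mu‖ ≤ ∑ x ∈ s, ‖((N : ℝ) * r x - (q x : ℝ)) • x‖ := by
          rw [hfmu]; exact norm_sum_le _ _
    _ ≤ ∑ x ∈ s, (1 / M) * ‖x‖ := by
          refine Finset.sum_le_sum fun x hx => ?_
          rw [norm_smul, Real.norm_eq_abs]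
          exact mul_le_mul_of_nonneg_right (hest x hx).le (norm_nonneg x)
    _ = (1 / M) * K := by rw [← Finset.mul_sum]
    _ < 1 := by
          rw [div_mul_eq_mul_div, one_mul, div_lt_one hM0]
          exact hKM
  have hmu0 : mu = 0 := by
    by_contra hmu0
    exact absurd hnorm (not_lt.2 (hdisc mu hmu0))
  have hNl0 : N • l0 = ∑ x ∈ s, (q x).toNat • L x := by
    rwa [sub_eq_zero] at hmu0
  have hmem : N • l0 ∈ X := by
    rw [hNl0]
    exact sum_mem_posSet h0 hadd s _ fun x hx =>
      nsmul_mem_posSet h0 hadd _ _ (hLX x hx)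
  exact hnot N hN1 hmem

end Aux

theorem exists_dominating_linear_form {Λ : Type*} [AddCommGroup Λ]
    [Module.Free ℤ Λ] [Module.Finite ℤ Λ]
    (X : Set Λ) (hX : IsPositiveSubset X) (hXproper : X ≠ Set.univ) :
    ∃ φ : (ℝ ⊗[ℤ] Λ) →ₗ[ℝ] ℝ, φ ≠ 0 ∧
      X ⊆ {l : Λ | 0 ≤ φ ((1 : ℝ) ⊗ₜ[ℤ] l)} := by
  classical
  obtain ⟨hunion, hXadd, -⟩ := hX
  have h0 : (0 : Λ) ∈ X := by
    have h : (0 : Λ) ∈ X ∪ (-X) := hunion ▸ Set.mem_univ 0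
    rcases h with h | h
    · exact h
    · simpa using h
  have hadd : ∀ a ∈ X, ∀ b ∈ X, a + b ∈ X := fun a ha b hb => hXadd (Set.add_mem_add ha hb)
  obtain ⟨l0, hl0⟩ : ∃ l0, l0 ∉ X := by
    by_contra h
    push_neg at h
    exact hXproper (Set.eq_univ_of_forall h)
  have hneg : -l0 ∈ X := by
    have h : l0 ∈ X ∪ (-X) := hunion ▸ Set.mem_univ l0
    rcases h with h | h
    · exact absurd h hl0
    · rwa [Set.mem_neg] at h
  have hnot : ∀ n : ℕ, 1 ≤ n → n • l0 ∉ X := by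
    intro n hn
    induction n with
    | zero => omega
    | succ m ih =>
      rcases Nat.eq_zero_or_pos m with rfl | hm
      · simpa using hl0
      · intro hmem
        refine ih hm ?_
        have h := hadd _ hmem _ hneg
        have : (m + 1) • l0 + -l0 = m • l0 := by
          rw [succ_nsmul]; abel
        rwa [this] at h
  -- the basis and the lattice embedding
  set ι := Module.Free.ChooseBasisIndex ℤ Λ with hι
  set b : Module.Basis ι ℤ Λ := Module.Free.chooseBasis ℤ Λ with hb
  set f : Λ →+ (ι → ℝ) :=
    { toFun := fun l i => ((b.repr l) i : ℝ)
      map_zero' := by ext i; simp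
      map_add' := by intro x y; ext i; simp } with hf
  have hfapply : ∀ (l : Λ) (i : ι), f l i = ((b.repr l) i : ℝ) := fun l i => rfl
  have hdisc : ∀ μ : Λ, μ ≠ 0 → 1 ≤ ‖f μ‖ := by
    intro μ hμ
    have hrepr : b.repr μ ≠ 0 := by
      intro h
      exact hμ (by simpa using congrArg b.repr.symm h)
    obtain ⟨i, hi⟩ : ∃ i, (b.repr μ) i ≠ 0 := by
      by_contra h
      push_neg at h
      exact hrepr (Finsupp.ext h)
    have h1 : (1 : ℝ) ≤ |((b.repr μ) i : ℝ)| := by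
      have := Int.one_le_abs hi
      exact_mod_cast this
    calc (1 : ℝ) ≤ |((b.repr μ) i : ℝ)| := h1
    _ = ‖f μ i‖ := by rw [hfapply, Real.norm_eq_abs]
    _ ≤ ‖f μ‖ := norm_le_pi_norm (f μ) i
  have hkey := key_not_mem_span h0 hadd hnot f hdisc
  -- the nonnegative cone spanned by the image of X
  set C : Submodule {c : ℝ // 0 ≤ c} (ι → ℝ) := Submodule.span {c : ℝ // 0 ≤ c} (⇑f '' X)
    with hC
  have hCconv : Convex ℝ (C : Set (ι → ℝ)) := by
    intro x hx y hy a bb ha hb hab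
    exact C.add_mem (C.smul_mem ⟨a, ha⟩ hx) (C.smul_mem ⟨bb, hb⟩ hy)
  -- there is a point outside the closure of the cone
  obtain ⟨pt, hpt⟩ : ∃ pt, pt ∉ closure (C : Set (ι → ℝ)) := by
    by_contra h
    push_neg at h
    have hdense : closure (C : Set (ι → ℝ)) = Set.univ := Set.eq_univ_of_forall h
    have haff : affineSpan ℝ (C : Set (ι → ℝ)) = ⊤ := by
      have h1 : IsClosed ((affineSpan ℝ (C : Set (ι → ℝ)) : Set (ι → ℝ))) :=
        (affineSpan ℝ (C : Set (ι → ℝ))).closed_of_finiteDimensional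
      have h2 : (Set.univ : Set (ι → ℝ)) ⊆ (affineSpan ℝ (C : Set (ι → ℝ)) : Set (ι → ℝ)) := by
        rw [← hdense]
        exact h1.closure_subset_iff.2 (subset_affineSpan ℝ _)
      apply AffineSubspace.coe_injective
      rw [AffineSubspace.top_coe]
      exact Set.Subset.antisymm (Set.subset_univ _) h2
    obtain ⟨x₀, hx₀⟩ := hCconv.interior_nonempty_iff_affineSpan_eq_top.2 haff
    have hz : (2 : ℝ) • (f l0) - x₀ ∈ closure (C : Set (ι → ℝ)) := by
      rw [hdense]; exact Set.mem_univ _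
    have hcombo := hCconv.combo_interior_closure_mem_interior hx₀ hz one_half_pos
      (by norm_num : (0:ℝ) ≤ 1/2) (by norm_num)
    have heqpt : (1 / 2 : ℝ) • x₀ + (1 / 2 : ℝ) • ((2 : ℝ) • (f l0) - x₀) = f l0 := by
      rw [smul_sub, smul_smul]
      norm_num
    rw [heqpt] at hcombo
    exact hkey (interior_subset hcombo)
  -- separation
  obtain ⟨φ, u, hφ1, hφ2⟩ :=
    geometric_hahn_banach_closed_point (hCconv.closure) isClosed_closure hpt
  have hu0 : 0 < u := by
    have h := hφ1 0 (subset_closure C.zero_mem)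
    simpa using h
  have hφle : ∀ a ∈ (C : Set (ι → ℝ)), φ a ≤ 0 := by
    intro a ha
    by_contra hpos
    push_neg at hpos
    obtain ⟨n, hn⟩ := exists_nat_gt (u / φ a)
    have hmem : (n : ℝ) • a ∈ (C : Set (ι → ℝ)) :=
      C.smul_mem (⟨(n : ℝ), by positivity⟩ : {c : ℝ // 0 ≤ c}) ha
    have h1 := hφ1 _ (subset_closure hmem)
    rw [map_smul, smul_eq_mul] at h1
    have h2 : u < n * φ a := (div_lt_iff₀ hpos).1 hn
    linarith
  -- pass to the tensor product
  set g : (ℝ ⊗[ℤ] Λ) →ₗ[ℝ] (ι → ℝ) := (f.toIntLinearMap).liftBaseChange ℝ with hg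
  have hgtmul : ∀ l : Λ, g ((1 : ℝ) ⊗ₜ[ℤ] l) = f l := by
    intro l
    rw [hg, LinearMap.liftBaseChange_tmul, one_smul]
    rfl
  have hgsurj : Function.Surjective g := by
    intro v
    refine ⟨∑ i, (v i) • ((1 : ℝ) ⊗ₜ[ℤ] (b i)), ?_⟩
    rw [map_sum]
    have h1 : ∀ i : ι, g ((v i) • ((1 : ℝ) ⊗ₜ[ℤ] (b i))) = Pi.single i (v i) := by
      intro i
      rw [map_smul, hgtmul]
      ext j
      rw [Pi.smul_apply, hfapply]
      by_cases hij : i = j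
      · subst hij; simp
      · simp [Module.Basis.repr_self, Finsupp.single_apply, hij, Pi.single_apply]
    rw [Finset.sum_congr rfl fun i _ => h1 i]
    exact Finset.univ_sum_single v
  refine ⟨-(φ.toLinearMap.comp g), ?_, ?_⟩
  · intro hzero
    obtain ⟨vp, hvp⟩ := hgsurj pt
    have h1 : φ pt = 0 := by
      have h2 := congrArg (fun ψ : (ℝ ⊗[ℤ] Λ) →ₗ[ℝ] ℝ => ψ vp) hzero
      simp only [LinearMap.neg_apply, LinearMap.comp_apply, LinearMap.zero_apply,
        neg_eq_zero, ContinuousLinearMap.coe_coe, hvp] at h2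
      exact h2
    linarith [hφ2]
  · intro l hl
    have h1 : φ (f l) ≤ 0 := hφle _ (Submodule.subset_span (Set.mem_image_of_mem (⇑f) hl))
    simp only [Set.mem_setOf_eq, LinearMap.neg_apply, LinearMap.comp_apply,
      ContinuousLinearMap.coe_coe, hgtmul]
    linarith
end

section
/- Let Λ be a free abelian group of finite rank, φ a nonzero linear form on V = ℝ ⊗_ℤ Λ, and let K = (ker φ) ∩ Λ. Then the map sending a positive subset X of K to X ∪ Pos⁺(φ) (where Pos⁺(φ) = {λ ∈ Λ : φ(λ) > 0}) is a bijection from the set of positive subsets of K onto the set of positive subsets Y of Λ satisfying Y ⊆ Pos(φ); its inverse sends Y to Y ∩ K. -/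
open Pointwise
open scoped TensorProduct

theorem fiber_bijection {Λ : Type*} [AddCommGroup Λ]
    [Module.Free ℤ Λ] [Module.Finite ℤ Λ]
    (φ : (ℝ ⊗[ℤ] Λ) →ₗ[ℝ] ℝ) (hφ : φ ≠ 0)
    (K : AddSubgroup Λ) (hK : ∀ l : Λ, l ∈ K ↔ φ ((1 : ℝ) ⊗ₜ[ℤ] l) = 0) :
    Set.BijOn
      (fun X : Set K => (Subtype.val '' X) ∪ {l : Λ | 0 < φ ((1 : ℝ) ⊗ₜ[ℤ] l)})
      {X : Set K | IsPositiveSubset X}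
      {Y : Set Λ | IsPositiveSubset Y ∧ Y ⊆ {l : Λ | 0 ≤ φ ((1 : ℝ) ⊗ₜ[ℤ] l)}} ∧
    Set.InvOn (fun Y : Set Λ => (Subtype.val ⁻¹' Y : Set K))
      (fun X : Set K => (Subtype.val '' X) ∪ {l : Λ | 0 < φ ((1 : ℝ) ⊗ₜ[ℤ] l)})
      {X : Set K | IsPositiveSubset X}
      {Y : Set Λ | IsPositiveSubset Y ∧ Y ⊆ {l : Λ | 0 ≤ φ ((1 : ℝ) ⊗ₜ[ℤ] l)}} := by
  classical
  set P : Set Λ := {l : Λ | 0 < φ ((1 : ℝ) ⊗ₜ[ℤ] l)} with hPdef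
  have hadd : ∀ a b : Λ, φ ((1:ℝ) ⊗ₜ[ℤ] (a+b))
      = φ ((1:ℝ) ⊗ₜ[ℤ] a) + φ ((1:ℝ) ⊗ₜ[ℤ] b) := by
    intro a b; rw [TensorProduct.tmul_add, map_add]
  have hneg : ∀ a : Λ, φ ((1:ℝ) ⊗ₜ[ℤ] (-a)) = - φ ((1:ℝ) ⊗ₜ[ℤ] a) := by
    intro a; rw [TensorProduct.tmul_neg, map_neg]
  have hKz : ∀ k : K, φ ((1:ℝ) ⊗ₜ[ℤ] (k:Λ)) = 0 := fun k => (hK k).1 k.2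
  -- forward maps to
  have hmapsF : Set.MapsTo (fun X : Set K => (Subtype.val '' X) ∪ P)
      {X : Set K | IsPositiveSubset X}
      {Y : Set Λ | IsPositiveSubset Y ∧ Y ⊆ {l : Λ | 0 ≤ φ ((1 : ℝ) ⊗ₜ[ℤ] l)}} := by
    rintro X ⟨hX1, hX2, H, hH⟩
    refine ⟨⟨?_, ?_, ?_⟩, ?_⟩
    · -- union with neg is univ
      apply Set.eq_univ_of_forall
      intro l
      rcases lt_trichotomy (φ ((1:ℝ) ⊗ₜ[ℤ] l)) 0 with h | h | h
      · refine Or.inr (Set.mem_neg.mpr (Or.inr ?_))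
        simpa [hPdef, hneg] using h
      · have hlK : l ∈ K := (hK l).2 h
        have : (⟨l, hlK⟩ : K) ∈ X ∪ (-X) := hX1 ▸ Set.mem_univ _
        rcases this with hx | hx
        · exact Or.inl (Or.inl ⟨_, hx, rfl⟩)
        · refine Or.inr (Set.mem_neg.mpr (Or.inl ?_))
          exact ⟨-(⟨l, hlK⟩ : K), Set.mem_neg.mp hx, rfl⟩
      · exact Or.inl (Or.inr h)
    · -- closed under addition
      intro x hx
      rw [Set.mem_add] at hx
      obtain ⟨a, ha, b, hb, rfl⟩ := hx
      rcases ha with ⟨a', ha', rfl⟩ | ha <;> rcases hb with ⟨b', hb', rfl⟩ | hb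
      · exact Or.inl ⟨a' + b', hX2 (Set.add_mem_add ha' hb'), rfl⟩
      · refine Or.inr ?_
        simp only [hPdef, Set.mem_setOf_eq] at hb ⊢
        rw [hadd, hKz]; simpa using hb
      · refine Or.inr ?_
        simp only [hPdef, Set.mem_setOf_eq] at ha ⊢
        rw [hadd, hKz]; simpa using ha
      · refine Or.inr ?_
        simp only [hPdef, Set.mem_setOf_eq] at ha hb ⊢
        rw [hadd]; positivity
    · -- subgroup
      refine ⟨H.map K.subtype, ?_⟩
      have himg : (↑(H.map K.subtype) : Set Λ) = Subtype.val '' (X ∩ (-X)) := by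
        rw [AddSubgroup.coe_map, hH]; rfl
      rw [himg]
      ext l
      constructor
      · rintro ⟨k, ⟨hk1, hk2⟩, rfl⟩
        refine ⟨Or.inl ⟨k, hk1, rfl⟩, Set.mem_neg.mpr (Or.inl ?_)⟩
        exact ⟨-k, Set.mem_neg.mp hk2, rfl⟩
      · rintro ⟨hl1, hl2⟩
        have hl2' := Set.mem_neg.mp hl2
        have hlim : l ∈ Subtype.val '' X := by
          rcases hl1 with h | h
          · exact h
          · exfalso
            rcases hl2' with ⟨k, _, hk⟩ | h'
            · have := hKz k
              rw [hk, hneg] at this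
              simp only [hPdef, Set.mem_setOf_eq] at h
              linarith
            · simp only [hPdef, Set.mem_setOf_eq, hneg] at h h'
              linarith
        have hlnim : -l ∈ Subtype.val '' X := by
          rcases hl2' with h | h
          · exact h
          · exfalso
            rcases hlim with ⟨k, _, hk⟩
            have hz := hKz k
            rw [hk] at hz
            simp only [hPdef, Set.mem_setOf_eq, hneg] at h
            linarith
        obtain ⟨k, hk, rfl⟩ := hlim
        obtain ⟨k', hk', hkk⟩ := hlnim
        have : k' = -k := Subtype.val_injective (by simpa using hkk)
        exact ⟨k, ⟨hk, Set.mem_neg.mpr (this ▸ hk')⟩, rfl⟩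
    · -- contained in nonneg
      rintro l (⟨k, _, rfl⟩ | h)
      · exact le_of_eq (hKz k).symm
      · exact le_of_lt (show (0:ℝ) < _ from h)
  -- backward maps to
  have hmapsG : Set.MapsTo (fun Y : Set Λ => (Subtype.val ⁻¹' Y : Set K))
      {Y : Set Λ | IsPositiveSubset Y ∧ Y ⊆ {l : Λ | 0 ≤ φ ((1 : ℝ) ⊗ₜ[ℤ] l)}}
      {X : Set K | IsPositiveSubset X} := by
    rintro Y ⟨⟨hY1, hY2, H, hH⟩, hYsub⟩
    have hnegpre : (Subtype.val ⁻¹' (-Y) : Set K) = -(Subtype.val ⁻¹' Y) := by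
      ext k
      simp [Set.mem_neg]
    refine ⟨?_, ?_, ?_⟩
    · apply Set.eq_univ_of_forall
      intro k
      have : (k : Λ) ∈ Y ∪ (-Y) := hY1 ▸ Set.mem_univ _
      rcases this with h | h
      · exact Or.inl h
      · exact Or.inr (Set.mem_neg.mpr (by simpa using Set.mem_neg.mp h))
    · intro x hx
      rw [Set.mem_add] at hx
      obtain ⟨a, ha, b, hb, rfl⟩ := hx
      have : (a : Λ) + (b : Λ) ∈ Y := hY2 (Set.add_mem_add ha hb)
      simpa [Set.mem_preimage] using this
    · refine ⟨H.comap K.subtype, ?_⟩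
      have : (↑(H.comap K.subtype) : Set K) = Subtype.val ⁻¹' (Y ∩ (-Y)) := by
        rw [← hH]; rfl
      rw [this, Set.preimage_inter, hnegpre]
  -- left inverse
  have hleft : Set.LeftInvOn (fun Y : Set Λ => (Subtype.val ⁻¹' Y : Set K))
      (fun X : Set K => (Subtype.val '' X) ∪ P) {X : Set K | IsPositiveSubset X} := by
    intro X _
    simp only
    rw [Set.preimage_union, Set.preimage_image_eq _ Subtype.val_injective]
    have : (Subtype.val ⁻¹' P : Set K) = ∅ := by
      ext k
      simp only [Set.mem_preimage, hPdef, Set.mem_setOf_eq, Set.mem_empty_iff_false,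
        iff_false, not_lt]
      exact le_of_eq (hKz k)
    rw [this, Set.union_empty]
  -- right inverse
  have hright : Set.RightInvOn (fun Y : Set Λ => (Subtype.val ⁻¹' Y : Set K))
      (fun X : Set K => (Subtype.val '' X) ∪ P)
      {Y : Set Λ | IsPositiveSubset Y ∧ Y ⊆ {l : Λ | 0 ≤ φ ((1 : ℝ) ⊗ₜ[ℤ] l)}} := by
    rintro Y ⟨⟨hY1, _, _⟩, hYsub⟩
    simp only
    have hPY : P ⊆ Y := by
      intro l hl
      have : l ∈ Y ∪ (-Y) := hY1 ▸ Set.mem_univ _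
      rcases this with h | h
      · exact h
      · exfalso
        have h' := hYsub (Set.mem_neg.mp h)
        simp only [hPdef, Set.mem_setOf_eq, hneg] at hl h'
        linarith
    ext l
    constructor
    · rintro (⟨k, hk, rfl⟩ | h)
      · exact hk
      · exact hPY h
    · intro hl
      rcases eq_or_lt_of_le (show (0:ℝ) ≤ _ from hYsub hl) with h | h
      · exact Or.inl ⟨⟨l, (hK l).2 h.symm⟩, hl, rfl⟩
      · exact Or.inr h
  exact ⟨Set.InvOn.bijOn ⟨hleft, hright⟩ hmapsF hmapsG, hleft, hright⟩
end

section
/- The set Pos(ℤ) of positive subsets of the group ℤ has exactly three elements: ℤ itself, ℤ_{≥0}, and ℤ_{≤0}. -/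
open Pointwise

lemma aux_nonneg_mem (X : Set ℤ) (hadd : X + X ⊆ X) (h0 : (0:ℤ) ∈ X)
    (h1 : (1:ℤ) ∈ X) : ∀ n : ℤ, 0 ≤ n → n ∈ X := by
  intro n hn
  obtain ⟨m, rfl⟩ := Int.eq_ofNat_of_zero_le hn
  induction m with
  | zero => exact h0
  | succ k ih =>
      have : ((k:ℤ) + 1) ∈ X := hadd (Set.add_mem_add (ih (by omega)) h1)
      simpa using this

lemma aux_nonpos_mem (X : Set ℤ) (hadd : X + X ⊆ X) (h0 : (0:ℤ) ∈ X)
    (h1 : (-1:ℤ) ∈ X) : ∀ n : ℤ, n ≤ 0 → n ∈ X := by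
  intro n hn
  obtain ⟨m, rfl⟩ : ∃ m : ℕ, n = -(m:ℤ) := ⟨n.natAbs, by omega⟩
  induction m with
  | zero => simpa using h0
  | succ k ih =>
      have hk : (-(k:ℤ)) ∈ X := ih (by omega)
      have : (-(k:ℤ) + -1) ∈ X := hadd (Set.add_mem_add hk h1)
      have e : (-(k:ℤ) + -1) = -((k+1 : ℕ):ℤ) := by push_cast; ring
      rwa [e] at this

theorem positiveSubsets_int :
    {X : Set ℤ | IsPositiveSubset X} =
      {Set.univ, {n : ℤ | 0 ≤ n}, {n : ℤ | n ≤ 0}} := by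
  ext X
  simp only [Set.mem_setOf_eq, Set.mem_insert_iff, Set.mem_singleton_iff]
  constructor
  · rintro ⟨huniv, hadd, H, hH⟩
    have h0 : (0:ℤ) ∈ X := by
      have : (0:ℤ) ∈ (H : Set ℤ) := H.zero_mem
      rw [hH] at this
      exact this.1
    by_cases h1 : (1:ℤ) ∈ X
    · by_cases hm1 : (-1:ℤ) ∈ X
      · -- X = univ
        left
        have h1H : (1:ℤ) ∈ (H : Set ℤ) := by
          rw [hH]
          exact ⟨h1, by simpa using hm1⟩
        ext x
        simp only [Set.mem_univ, iff_true]
        have hx : x ∈ (H : Set ℤ) := by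
          have := H.zsmul_mem h1H x
          simpa using this
        rw [hH] at hx
        exact hx.1
      · -- X = {n | 0 ≤ n}
        right; left
        ext n
        simp only [Set.mem_setOf_eq]
        constructor
        · intro hn
          by_contra hlt
          push_neg at hlt
          have hmem : (-n - 1 : ℤ) ∈ X :=
            aux_nonneg_mem X hadd h0 h1 _ (by omega)
          have : (-1:ℤ) ∈ X := by
            have h := hadd (Set.add_mem_add hn hmem)
            have e : n + (-n - 1) = (-1:ℤ) := by ring
            rwa [e] at h
          exact hm1 this
        · exact aux_nonneg_mem X hadd h0 h1 n
    · -- 1 ∉ X, so -1 ∈ X, X = {n | n ≤ 0}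
      right; right
      have hm1 : (-1:ℤ) ∈ X := by
        have : (-1:ℤ) ∈ X ∪ (-X) := huniv ▸ Set.mem_univ _
        rcases this with h | h
        · exact h
        · exact absurd (by simpa using h) h1
      ext n
      simp only [Set.mem_setOf_eq]
      constructor
      · intro hn
        by_contra hlt
        push_neg at hlt
        have hmem : (-n + 1 : ℤ) ∈ X :=
          aux_nonpos_mem X hadd h0 hm1 _ (by omega)
        have : (1:ℤ) ∈ X := by
          have h := hadd (Set.add_mem_add hn hmem)
          have e : n + (-n + 1) = (1:ℤ) := by ring
          rwa [e] at h
        exact h1 this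
      · exact aux_nonpos_mem X hadd h0 hm1 n
  · rintro (rfl | rfl | rfl)
    · refine ⟨by simp, by simp, ⊤, by simp⟩
    · refine ⟨?_, ?_, ⊥, ?_⟩
      · ext n
        simp only [Set.mem_union, Set.mem_setOf_eq, Set.mem_neg, Set.mem_univ, iff_true]
        omega
      · rintro x ⟨a, ha, b, hb, rfl⟩
        simp only [Set.mem_setOf_eq] at *
        omega
      · ext n
        simp only [AddSubgroup.coe_bot, Set.mem_singleton_iff, Set.mem_inter_iff,
          Set.mem_setOf_eq, Set.mem_neg]
        omega
    · refine ⟨?_, ?_, ⊥, ?_⟩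
      · ext n
        simp only [Set.mem_union, Set.mem_setOf_eq, Set.mem_neg, Set.mem_univ, iff_true]
        omega
      · rintro x ⟨a, ha, b, hb, rfl⟩
        simp only [Set.mem_setOf_eq] at *
        omega
      · ext n
        simp only [AddSubgroup.coe_bot, Set.mem_singleton_iff, Set.mem_inter_iff,
          Set.mem_setOf_eq, Set.mem_neg]
        omega
end

section
/- Let Λ be a free abelian group of finite rank, V = ℝ ⊗_ℤ Λ, and E a finite subset of Λ. Define U(E) = {X ∈ Pos(Λ) : X ∩ E = ∅}. Then the following are equivalent: (1) U(E) = ∅; (2) there exist n ≥ 1, λ₁, …, λ_n ∈ E and positive integers r₁, …, r_n with r₁λ₁ + ⋯ + r_nλ_n = 0; (3) there is no linear form φ on V with φ(λ) > 0 for all λ ∈ E. -/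
open Pointwise
open scoped TensorProduct

private lemma sum_nsmul_mem {Λ : Type*} [AddCommGroup Λ] {X : Set Λ} (h0 : (0:Λ) ∈ X)
    (hadd : X + X ⊆ X) {n : ℕ} (a : Fin n → Λ) (ha : ∀ i, a i ∈ X) (c : Fin n → ℕ) :
    ∑ i, c i • a i ∈ X := by
  have hadd' : ∀ x ∈ X, ∀ y ∈ X, x + y ∈ X := fun x hx y hy =>
    hadd (Set.add_mem_add hx hy)
  have hns : ∀ (m : ℕ) (x), x ∈ X → m • x ∈ X := by
    intro m x hx
    induction m with
    | zero => simpa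
    | succ p ih => rw [succ_nsmul]; exact hadd' _ ih _ hx
  exact Finset.sum_induction _ (· ∈ X) (fun x y hx hy => hadd' x hx y hy) h0
    (fun i _ => hns _ _ (ha i))

private lemma rat_solution {k : ℕ} {ι : Type*} [Fintype ι] (A : ι → Fin k → ℚ) (y : Fin k → ℝ)
    (hy : ∀ i, 0 < y i) (hA : ∀ j, ∑ i, (A j i : ℝ) * y i = 0) :
    ∃ q : Fin k → ℚ, (∀ i, 0 < q i) ∧ ∀ j, ∑ i, A j i * q i = 0 := by
  rcases Nat.eq_zero_or_pos k with hk | hk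
  · subst hk
    exact ⟨Fin.elim0, fun i => i.elim0, fun j => by simp⟩
  set T : Submodule ℚ ℝ := Submodule.span ℚ (Set.range y) with hT
  haveI : Module.Finite ℚ T := Module.Finite.span_of_finite ℚ (Set.finite_range y)
  set d := Module.finrank ℚ T with hd
  set t : Module.Basis (Fin d) ℚ T := Module.finBasis ℚ T with ht
  set y' : Fin k → T := fun i => ⟨y i, Submodule.subset_span (Set.mem_range_self i)⟩ with hy'
  set c : Fin k → Fin d → ℚ := fun i s => t.repr (y' i) s with hc
  -- each "slice" is a rational solution
  have hsol : ∀ s j, ∑ i, A j i * c i s = 0 := by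
    intro s j
    have h0 : ∑ i, A j i • y' i = 0 := by
      apply Subtype.ext
      push_cast [Submodule.coe_sum]
      simpa [Rat.smul_def] using hA j
    have := congrArg (fun v => t.repr v s) h0
    simpa [map_sum, Finsupp.sum_apply, smul_eq_mul, hc] using this
  -- decomposition of y
  have hdec : ∀ i, y i = ∑ s, (c i s : ℝ) * (t s : ℝ) := by
    intro i
    have := t.sum_repr (y' i)
    have := congrArg (Subtype.val : T → ℝ) this
    push_cast [Submodule.coe_sum] at this
    simp only [Rat.smul_def] at this
    exact this.symm
  haveI : Nonempty (Fin k) := ⟨⟨0, hk⟩⟩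
  set m : ℝ := Finset.univ.inf' Finset.univ_nonempty y with hm
  have hmpos : 0 < m := by
    rw [hm, Finset.lt_inf'_iff]; exact fun i _ => hy i
  have hmle : ∀ i, m ≤ y i := fun i => Finset.inf'_le _ (Finset.mem_univ i)
  set B : ℝ := (∑ s, ∑ i, |(c i s : ℝ)|) + 1 with hB
  have hBpos : 0 < B := by positivity
  set δ : ℝ := m / B with hδ
  have hδpos : 0 < δ := div_pos hmpos hBpos
  have hex : ∀ s : Fin d, ∃ ρ : ℚ, |(t s : ℝ) - ρ| < δ := fun s => exists_rat_near _ hδpos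
  choose ρ hρ using hex
  refine ⟨fun i => ∑ s, ρ s * c i s, ?_, ?_⟩
  · intro i
    have key : |y i - ((∑ s, ρ s * c i s : ℚ) : ℝ)| < m := by
      push_cast
      rw [hdec i, ← Finset.sum_sub_distrib]
      calc |∑ s, ((c i s:ℝ) * (t s:ℝ) - (ρ s:ℝ) * (c i s:ℝ))|
          ≤ ∑ s, |(c i s:ℝ) * (t s:ℝ) - (ρ s:ℝ) * (c i s:ℝ)| := Finset.abs_sum_le_sum_abs _ _
        _ = ∑ s, |(t s:ℝ) - (ρ s:ℝ)| * |(c i s:ℝ)| := by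
              refine Finset.sum_congr rfl fun s _ => ?_
              rw [← abs_mul]; congr 1; ring
        _ ≤ ∑ s, δ * |(c i s:ℝ)| :=
              Finset.sum_le_sum fun s _ =>
                mul_le_mul_of_nonneg_right (le_of_lt (hρ s)) (abs_nonneg _)
        _ = δ * ∑ s, |(c i s:ℝ)| := by rw [Finset.mul_sum]
        _ ≤ δ * (B - 1) := by
              refine mul_le_mul_of_nonneg_left ?_ (le_of_lt hδpos)
              calc ∑ s, |(c i s:ℝ)| ≤ ∑ s, ∑ i', |(c i' s:ℝ)| :=
                    Finset.sum_le_sum fun s _ =>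
                      Finset.single_le_sum (f := fun i' => |(c i' s:ℝ)|) (fun i' _ => abs_nonneg _) (Finset.mem_univ i)
                _ = B - 1 := by rw [hB]; ring
        _ < δ * B := by nlinarith
        _ = m := div_mul_cancel₀ m (ne_of_gt hBpos)
    have h1 := (abs_lt.mp key).2
    have h2 := hmle i
    have h3 : (0:ℝ) < ((∑ s, ρ s * c i s : ℚ) : ℝ) := by linarith
    exact_mod_cast h3
  · intro j
    have hcomm : ∑ i, A j i * ∑ s, ρ s * c i s = ∑ s, ρ s * ∑ i, A j i * c i s := by
      simp_rw [Finset.mul_sum]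
      rw [Finset.sum_comm]
      exact Finset.sum_congr rfl fun s _ => Finset.sum_congr rfl fun i _ => by ring
    rw [hcomm]
    simp [hsol]

theorem uce_empty_tfae {Λ : Type*} [AddCommGroup Λ]
    [Module.Free ℤ Λ] [Module.Finite ℤ Λ] (E : Finset Λ) :
    [({X : Set Λ | IsPositiveSubset X ∧ X ∩ (E : Set Λ) = ∅} = ∅),
     (∃ (n : ℕ) (l : Fin n → Λ) (r : Fin n → ℕ), 1 ≤ n ∧
        (∀ i, l i ∈ E) ∧ (∀ i, 0 < r i) ∧ ∑ i, (r i : ℤ) • l i = 0),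
     (¬ ∃ φ : (ℝ ⊗[ℤ] Λ) →ₗ[ℝ] ℝ, ∀ l ∈ E, 0 < φ ((1 : ℝ) ⊗ₜ[ℤ] l))].TFAE := by
  tfae_have 2 → 1 := by
    rintro ⟨n, l, r, hn, hlE, hr, hsum⟩
    rw [Set.eq_empty_iff_forall_notMem]
    rintro X ⟨⟨hu, hadd, -⟩, hXE⟩
    have h0X : (0:Λ) ∈ X := by
      have : (0:Λ) ∈ X ∪ (-X) := by rw [hu]; trivial
      rcases this with h | h
      · exact h
      · simpa using h
    have hnotX : ∀ i, l i ∉ X := by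
      intro i hi
      exact Set.eq_empty_iff_forall_notMem.mp hXE (l i) ⟨hi, hlE i⟩
    have hneg : ∀ i, -(l i) ∈ X := by
      intro i
      have : l i ∈ X ∪ (-X) := by rw [hu]; trivial
      rcases this with h | h
      · exact absurd h (hnotX i)
      · simpa using h
    set i₀ : Fin n := ⟨0, hn⟩ with hi₀
    set c : Fin n → ℕ := fun i => if i = i₀ then r i - 1 else r i with hc
    have hSmem : ∑ i, c i • (-(l i)) ∈ X := sum_nsmul_mem h0X hadd _ hneg c
    have hS : ∑ i, c i • (-(l i)) = l i₀ := by
      have hcast : ∀ i, (c i : ℤ) = (r i : ℤ) - (if i = i₀ then 1 else 0) := by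
        intro i
        rw [hc]
        rcases eq_or_ne i i₀ with h | h
        · subst h
          simp [Nat.cast_sub (hr i₀)]
        · simp [h]
      calc ∑ i, c i • (-(l i)) = ∑ i, (c i : ℤ) • (-(l i)) := by
            simp [natCast_zsmul]
        _ = -∑ i, (c i : ℤ) • l i := by rw [← Finset.sum_neg_distrib]; simp
        _ = l i₀ := by
            simp_rw [hcast, sub_smul, Finset.sum_sub_distrib, hsum, ite_smul, one_smul,
              zero_smul]
            simp
    rw [hS] at hSmem
    exact hnotX i₀ hSmem
  tfae_have 1 → 3 := by
    intro h1
    rintro ⟨φ, hφ⟩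
    set X : Set Λ := {l : Λ | φ ((1:ℝ) ⊗ₜ[ℤ] l) ≤ 0} with hX
    have hmem : X ∈ {X : Set Λ | IsPositiveSubset X ∧ X ∩ (E : Set Λ) = ∅} := by
      constructor
      · refine ⟨?_, ?_, ?_⟩
        · ext l
          simp only [Set.mem_union, Set.mem_univ, iff_true, Set.mem_neg, hX,
            Set.mem_setOf_eq, TensorProduct.tmul_neg, map_neg]
          rcases le_or_gt (φ ((1:ℝ) ⊗ₜ[ℤ] l)) 0 with h | h
          · exact Or.inl h
          · exact Or.inr (by linarith)
        · rintro x hx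
          rw [Set.mem_add] at hx
          obtain ⟨a, ha, b, hb, rfl⟩ := hx
          simp only [hX, Set.mem_setOf_eq, TensorProduct.tmul_add, map_add] at *
          linarith
        · refine ⟨(AddMonoidHom.mk' (fun l => φ ((1:ℝ) ⊗ₜ[ℤ] l))
            (fun a b => by
              show φ ((1:ℝ) ⊗ₜ[ℤ] (a + b)) = φ ((1:ℝ) ⊗ₜ[ℤ] a) + φ ((1:ℝ) ⊗ₜ[ℤ] b)
              rw [TensorProduct.tmul_add, map_add])).ker, ?_⟩
          ext l
          simp only [AddMonoidHom.mem_ker, AddMonoidHom.mk'_apply, Set.mem_inter_iff,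
            Set.mem_neg, hX, Set.mem_setOf_eq, TensorProduct.tmul_neg, map_neg,
            SetLike.mem_coe]
          constructor
          · intro h; constructor <;> linarith
          · rintro ⟨h1', h2'⟩; linarith
      · rw [Set.eq_empty_iff_forall_notMem]
        rintro l ⟨hl1, hl2⟩
        have := hφ l hl2
        rw [hX, Set.mem_setOf_eq] at hl1
        linarith
    rw [h1] at hmem
    exact hmem
  tfae_have 3 → 2 := by
    intro h3
    classical
    set b : Module.Basis (Module.Free.ChooseBasisIndex ℤ Λ) ℤ Λ := Module.Free.chooseBasis ℤ Λ with hb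
    set e : (ℝ ⊗[ℤ] Λ) ≃ₗ[ℝ] (Module.Free.ChooseBasisIndex ℤ Λ → ℝ) :=
      (b.baseChange ℝ).equivFun with he
    set g : Λ → (Module.Free.ChooseBasisIndex ℤ Λ → ℝ) := fun v => e ((1:ℝ) ⊗ₜ[ℤ] v) with hg
    have hgcoord : ∀ v j, g v j = ((b.repr v j : ℤ) : ℝ) := by
      intro v j
      rw [hg]
      simp [he, Module.Basis.equivFun_apply, Module.Basis.baseChange_repr_tmul, zsmul_eq_mul]
    have hhull : (0 : Module.Free.ChooseBasisIndex ℤ Λ → ℝ) ∈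
        convexHull ℝ (↑(E.image g) : Set (Module.Free.ChooseBasisIndex ℤ Λ → ℝ)) := by
      by_contra hnot
      obtain ⟨f, u, hfu, hfb⟩ := geometric_hahn_banach_point_closed
        (convex_convexHull ℝ _) ((E.image g).finite_toSet.isClosed_convexHull ℝ) hnot
      rw [map_zero] at hfu
      refine h3 ⟨(f : (Module.Free.ChooseBasisIndex ℤ Λ → ℝ) →ₗ[ℝ] ℝ).comp e.toLinearMap, ?_⟩
      intro l hl
      have hmem : g l ∈ convexHull ℝ (↑(E.image g) :
          Set (Module.Free.ChooseBasisIndex ℤ Λ → ℝ)) :=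
        subset_convexHull ℝ _ (by
          rw [Finset.mem_coe, Finset.mem_image]; exact ⟨l, hl, rfl⟩)
      have h2 := hfb _ hmem
      have : (0:ℝ) < f (g l) := lt_trans hfu h2
      simpa [hg] using this
    rw [Finset.convexHull_eq] at hhull
    obtain ⟨w, hw0, hw1, hwc⟩ := hhull
    rw [Finset.centerMass_eq_of_sum_1 _ _ hw1] at hwc
    set F := (E.image g).filter (fun v => 0 < w v) with hF
    have hsumF : ∑ v ∈ F, w v • v = 0 := by
      rw [hF, Finset.sum_filter_of_ne, ← hwc]
      · simp
      · intro v hv hne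
        rcases lt_or_eq_of_le (hw0 v hv) with h | h
        · exact h
        · exact absurd (by rw [← h]; simp) hne
    have hsumw : ∑ v ∈ F, w v = 1 := by
      rw [hF, Finset.sum_filter_of_ne, hw1]
      intro v hv hne
      exact lt_of_le_of_ne (hw0 v hv) (Ne.symm hne)
    have hFne : F.Nonempty := by
      rw [Finset.nonempty_iff_ne_empty]
      intro h
      rw [h] at hsumw
      simp at hsumw
    set k := F.card with hk
    have hk1 : 1 ≤ k := Finset.card_pos.mpr hFne
    set ev := F.equivFin with hev
    set v : Fin k → (Module.Free.ChooseBasisIndex ℤ Λ → ℝ) :=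
      fun i => ((ev.symm i : F) : Module.Free.ChooseBasisIndex ℤ Λ → ℝ) with hv
    have hvF : ∀ i, v i ∈ F := fun i => (ev.symm i).2
    have hexl : ∀ i : Fin k, ∃ x ∈ E, g x = v i := by
      intro i
      have := hvF i
      rw [hF, Finset.mem_filter, Finset.mem_image] at this
      exact this.1
    choose l hlE hlg using hexl
    set y : Fin k → ℝ := fun i => w (v i) with hy
    have hypos : ∀ i, 0 < y i := by
      intro i
      have := hvF i
      rw [hF, Finset.mem_filter] at this
      exact this.2
    have hsum0 : ∑ i, y i • v i = 0 := by
      have h1 := Finset.sum_coe_sort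
        (f := fun x : Module.Free.ChooseBasisIndex ℤ Λ → ℝ => w x • x) (s := F)
      rw [hsumF] at h1
      rw [← h1]
      exact Equiv.sum_comp ev.symm (fun x : {x // x ∈ F} =>
        w (x : Module.Free.ChooseBasisIndex ℤ Λ → ℝ) • (x : Module.Free.ChooseBasisIndex ℤ Λ → ℝ))
    set A : Module.Free.ChooseBasisIndex ℤ Λ → Fin k → ℚ :=
      fun j i => ((b.repr (l i) j : ℤ) : ℚ) with hA
    have hAy : ∀ j, ∑ i, ((A j i : ℚ) : ℝ) * y i = 0 := by
      intro j
      have := congrFun hsum0 j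
      simp only [Finset.sum_apply, Pi.zero_apply, Pi.smul_apply, smul_eq_mul] at this
      rw [← this]
      refine Finset.sum_congr rfl fun i _ => ?_
      have : v i j = ((b.repr (l i) j : ℤ) : ℝ) := by rw [← hlg i, hgcoord]
      rw [this, hA]
      push_cast
      ring
    obtain ⟨q, hqpos, hq⟩ := rat_solution A y hypos hAy
    set N : ℕ := ∏ i, (q i).den with hN
    have hNpos : 0 < N := Finset.prod_pos (fun i _ => (q i).pos)
    have hdvd : ∀ i, (q i).den ∣ N := fun i => Finset.dvd_prod_of_mem _ (Finset.mem_univ i)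
    set z : Fin k → ℤ := fun i => (q i).num * ((N / (q i).den : ℕ) : ℤ) with hz
    have hzq : ∀ i, (z i : ℚ) = q i * N := by
      intro i
      have hNd : (N : ℚ) = ((q i).den : ℚ) * ((N / (q i).den : ℕ) : ℚ) := by
        exact_mod_cast (Nat.mul_div_cancel' (hdvd i)).symm
      have h2 : (z i : ℚ) = ((q i).num : ℚ) * ((N / (q i).den : ℕ) : ℚ) := by
        show (((q i).num * ((N / (q i).den : ℕ) : ℤ) : ℤ) : ℚ) =
          ((q i).num : ℚ) * ((N / (q i).den : ℕ) : ℚ)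
        rw [Int.cast_mul, Int.cast_natCast]
      rw [h2, hNd, ← mul_assoc, Rat.mul_den_eq_num]
    have hzpos : ∀ i, 0 < z i := by
      intro i
      rw [hz]
      have h1 : 0 < (q i).num := Rat.num_pos.mpr (hqpos i)
      have h2 : 0 < N / (q i).den := Nat.div_pos (Nat.le_of_dvd hNpos (hdvd i)) (q i).pos
      positivity
    have hzsol : ∀ j, ∑ i, z i * (b.repr (l i) j) = 0 := by
      intro j
      have : ((∑ i, z i * (b.repr (l i) j) : ℤ) : ℚ) = 0 := by
        push_cast
        calc ∑ i, (z i : ℚ) * ((b.repr (l i) j : ℤ) : ℚ)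
            = ∑ i, (N : ℚ) * (A j i * q i) := by
              refine Finset.sum_congr rfl fun i _ => ?_
              rw [hzq i, hA]
              ring
          _ = (N : ℚ) * ∑ i, A j i * q i := by rw [Finset.mul_sum]
          _ = 0 := by rw [hq j]; ring
      exact_mod_cast this
    refine ⟨k, l, fun i => (z i).toNat, hk1, hlE, ?_, ?_⟩
    · intro i
      show 0 < (z i).toNat
      have := hzpos i
      omega
    · have hcast : ∀ i, (((z i).toNat : ℤ)) = z i := fun i => Int.toNat_of_nonneg (hzpos i).le
      simp_rw [hcast]
      refine b.ext_elem fun j => ?_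
      rw [map_sum, map_zero]
      simp_rw [map_zsmul]
      rw [Finsupp.finset_sum_apply]
      simp_rw [Finsupp.smul_apply, smul_eq_mul]
      exact hzsol j
  tfae_finish
end

section
/- Let Λ be a free abelian group of finite rank with the topology on Pos(Λ) generated as follows: a set is open iff each of its points X admits a finite E ⊆ Λ with X ∩ E = ∅ and {Y positive : Y ∩ E = ∅} contained in the set. Let E be a finite subset of Λ with U(E) = {X ∈ Pos(Λ) : X ∩ E = ∅} nonempty. Then the closure of U(E) in Pos(Λ) equals Pos(Λ) \ (⋃_{λ ∈ E} U({−λ})), i.e. it is the set of positive X such that −λ ∈ X for all λ ∈ E. -/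
open Pointwise

lemma pos_lex_aux {Λ : Type*} [AddCommGroup Λ] {X Z : Set Λ}
    (hX : IsPositiveSubset X) (hZ : IsPositiveSubset Z) :
    IsPositiveSubset ((X ∩ -X ∩ Z) ∪ (X \ -X)) := by
  obtain ⟨hXu, hXa, HX, hHX⟩ := hX
  obtain ⟨hZu, hZa, HZ, hHZ⟩ := hZ
  have hmem : ∀ a : Λ, a ∈ (X ∩ -X ∩ Z) ∪ (X \ -X) ↔
      (a ∈ X ∧ -a ∈ X ∧ a ∈ Z) ∨ (a ∈ X ∧ -a ∉ X) := by
    intro a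
    simp only [Set.mem_union, Set.mem_inter_iff, Set.mem_diff, Set.mem_neg, and_assoc]
  have hXtot : ∀ a : Λ, a ∈ X ∨ -a ∈ X := by
    intro a
    have : a ∈ X ∪ -X := hXu ▸ Set.mem_univ a
    simpa [Set.mem_neg] using this
  have hZtot : ∀ a : Λ, a ∈ Z ∨ -a ∈ Z := by
    intro a
    have : a ∈ Z ∪ -Z := hZu ▸ Set.mem_univ a
    simpa [Set.mem_neg] using this
  have hXadd : ∀ a b : Λ, a ∈ X → b ∈ X → a + b ∈ X :=
    fun a b ha hb => hXa (Set.add_mem_add ha hb)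
  have hZadd : ∀ a b : Λ, a ∈ Z → b ∈ Z → a + b ∈ Z :=
    fun a b ha hb => hZa (Set.add_mem_add ha hb)
  refine ⟨?_, ?_, ?_⟩
  · refine Set.eq_univ_of_forall fun a => ?_
    rw [Set.mem_union, Set.mem_neg, hmem, hmem, neg_neg]
    rcases hXtot a with ha | ha
    · by_cases ha' : -a ∈ X
      · rcases hZtot a with hz | hz
        · exact Or.inl (Or.inl ⟨ha, ha', hz⟩)
        · exact Or.inr (Or.inl ⟨ha', ha, hz⟩)
      · exact Or.inl (Or.inr ⟨ha, ha'⟩)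
    · by_cases ha' : a ∈ X
      · rcases hZtot a with hz | hz
        · exact Or.inl (Or.inl ⟨ha', ha, hz⟩)
        · exact Or.inr (Or.inl ⟨ha, ha', hz⟩)
      · exact Or.inr (Or.inr ⟨ha, ha'⟩)
  · intro c hc
    rw [Set.mem_add] at hc
    obtain ⟨a, ha, b, hb, rfl⟩ := hc
    rw [hmem] at ha hb ⊢
    have key : ∀ u v : Λ, u ∈ X → -u ∈ X → v ∈ X → -v ∉ X → -(u + v) ∉ X := by
      intro u v huX huX' hvX hvX' h
      have := hXadd _ _ h huX
      have : -v ∈ X := by simpa [neg_add_rev, add_assoc] using this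
      exact hvX' this
    rcases ha with ⟨haX, haX', haZ⟩ | ⟨haX, haX'⟩ <;>
      rcases hb with ⟨hbX, hbX', hbZ⟩ | ⟨hbX, hbX'⟩
    · exact Or.inl ⟨hXadd _ _ haX hbX,
        by simpa [neg_add_rev, add_comm] using hXadd _ _ haX' hbX', hZadd _ _ haZ hbZ⟩
    · exact Or.inr ⟨hXadd _ _ haX hbX, key a b haX haX' hbX hbX'⟩
    · refine Or.inr ⟨hXadd _ _ haX hbX, ?_⟩
      have := key b a hbX hbX' haX haX'
      simpa [add_comm] using this
    · refine Or.inr ⟨hXadd _ _ haX hbX, fun h => haX' ?_⟩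
      have := hXadd _ _ h hbX
      simpa [neg_add_rev, add_assoc] using this
  · refine ⟨HX ⊓ HZ, ?_⟩
    have hmemX : ∀ a : Λ, a ∈ HX ↔ a ∈ X ∧ -a ∈ X := by
      intro a
      rw [← SetLike.mem_coe, hHX]
      simp [Set.mem_neg]
    have hmemZ : ∀ a : Λ, a ∈ HZ ↔ a ∈ Z ∧ -a ∈ Z := by
      intro a
      rw [← SetLike.mem_coe, hHZ]
      simp [Set.mem_neg]
    ext a
    rw [SetLike.mem_coe, AddSubgroup.mem_inf, hmemX, hmemZ]
    constructor
    · rintro ⟨⟨haX, haX'⟩, haZ, haZ'⟩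
      exact ⟨(hmem a).mpr (Or.inl ⟨haX, haX', haZ⟩),
        by rw [Set.mem_neg, hmem]; exact Or.inl ⟨haX', by simpa using haX, haZ'⟩⟩
    · rintro ⟨h1, h2⟩
      rw [hmem] at h1
      rw [Set.mem_neg, hmem, neg_neg] at h2
      rcases h1 with ⟨haX, haX', haZ⟩ | ⟨haX, haX'⟩
      · rcases h2 with ⟨hbX, hbX', hbZ⟩ | ⟨hbX, hbX'⟩
        · exact ⟨⟨haX, haX'⟩, haZ, hbZ⟩
        · exact absurd haX hbX'
      · rcases h2 with ⟨hbX, hbX', hbZ⟩ | ⟨hbX, hbX'⟩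
        · exact absurd hbX haX'
        · exact absurd haX hbX'

theorem closure_of_uce {Λ : Type*} [AddCommGroup Λ]
    [Module.Free ℤ Λ] [Module.Finite ℤ Λ]
    (t : TopologicalSpace {X : Set Λ // IsPositiveSubset X})
    (ht : ∀ O : Set {X : Set Λ // IsPositiveSubset X},
      @IsOpen _ t O ↔ ∀ X ∈ O, ∃ E : Finset Λ,
        ((X : Set Λ) ∩ (E : Set Λ) = ∅) ∧
        {Y : {X : Set Λ // IsPositiveSubset X} | (Y : Set Λ) ∩ (E : Set Λ) = ∅} ⊆ O)
    (E : Finset Λ)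
    (hE : {X : {X : Set Λ // IsPositiveSubset X} | (X : Set Λ) ∩ (E : Set Λ) = ∅} ≠ ∅) :
    @closure _ t {X : {X : Set Λ // IsPositiveSubset X} | (X : Set Λ) ∩ (E : Set Λ) = ∅} =
      {X : {X : Set Λ // IsPositiveSubset X} | ∀ l ∈ E, -l ∈ (X : Set Λ)} := by
  letI := t
  obtain ⟨Z, hZE⟩ := Set.nonempty_iff_ne_empty.mpr hE
  apply subset_antisymm
  · apply closure_minimal
    · intro X hX l hl
      have hlX : l ∉ (X : Set Λ) := by
        intro h
        have : l ∈ (X : Set Λ) ∩ (E : Set Λ) := ⟨h, by simpa using hl⟩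
        rw [hX] at this; exact this
      obtain ⟨hXu, -, -⟩ := X.2
      have : l ∈ (X : Set Λ) ∪ -(X : Set Λ) := hXu ▸ Set.mem_univ l
      rcases this with h | h
      · exact absurd h hlX
      · simpa [Set.mem_neg] using h
    · rw [← isOpen_compl_iff, ht]
      intro X hX
      simp only [Set.mem_compl_iff, Set.mem_setOf_eq, not_forall] at hX
      obtain ⟨l, hlE, hlX⟩ := hX
      refine ⟨{-l}, ?_, ?_⟩
      · ext a
        simp only [Set.mem_inter_iff, Finset.coe_singleton, Set.mem_singleton_iff,
          Set.mem_empty_iff_false, iff_false, not_and]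
        rintro ha rfl
        exact hlX ha
      · intro Y hY
        simp only [Set.mem_setOf_eq, Finset.coe_singleton] at hY
        simp only [Set.mem_compl_iff, Set.mem_setOf_eq, not_forall]
        refine ⟨l, hlE, fun h => ?_⟩
        have : -l ∈ (Y : Set Λ) ∩ {-l} := ⟨h, rfl⟩
        rw [hY] at this; exact this
  · intro X hX
    rw [mem_closure_iff]
    intro O hO hXO
    obtain ⟨F, hXF, hFO⟩ := (ht O).mp hO X hXO
    set Y : Set Λ := ((X : Set Λ) ∩ -(X : Set Λ) ∩ (Z : Set Λ)) ∪
      ((X : Set Λ) \ -(X : Set Λ)) with hYdef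
    have hYpos : IsPositiveSubset Y := pos_lex_aux X.2 Z.2
    refine ⟨⟨Y, hYpos⟩, hFO ?_, ?_⟩
    · -- Y ∩ F = ∅
      show Y ∩ (F : Set Λ) = ∅
      ext a
      simp only [Set.mem_inter_iff, Set.mem_empty_iff_false, iff_false, not_and]
      intro haY haF
      have haX : a ∉ (X : Set Λ) := by
        intro h
        have : a ∈ (X : Set Λ) ∩ (F : Set Λ) := ⟨h, haF⟩
        rw [hXF] at this; exact this
      rcases haY with ⟨⟨h, -⟩, -⟩ | ⟨h, -⟩ <;> exact haX h
    · -- Y ∩ E = ∅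
      show Y ∩ (E : Set Λ) = ∅
      ext a
      simp only [Set.mem_inter_iff, Set.mem_empty_iff_false, iff_false, not_and]
      intro haY haE
      have haE' : a ∈ E := by simpa using haE
      have haZ : a ∉ (Z : Set Λ) := by
        intro h
        have : a ∈ (Z : Set Λ) ∩ (E : Set Λ) := ⟨h, haE⟩
        rw [hZE] at this; exact this
      have hna : a ∈ -(X : Set Λ) := by
        simpa [Set.mem_neg] using hX a haE'
      rcases haY with ⟨-, h⟩ | ⟨-, h⟩
      · exact haZ h
      · exact h hna
end

section
/- Let Λ be a free abelian group of finite rank and E ⊆ Λ. Define L(E) = {X ∈ Pos(Λ) : E ⊆ X ∩ (−X)} and let Λ(E) = Λ ∩ span_ℚ(E). Then L(E) = {X ∈ Pos(Λ) : Λ(E) ⊆ X}, and L(E) is closed in the topology on Pos(Λ). -/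
open Pointwise
open scoped TensorProduct

private lemma tmul_one_injective {Λ : Type*} [AddCommGroup Λ] [Module.Free ℤ Λ] :
    Function.Injective (fun l : Λ => ((1 : ℚ) ⊗ₜ[ℤ] l : ℚ ⊗[ℤ] Λ)) := by
  classical
  let b := Module.Free.chooseBasis ℤ Λ
  intro x y h
  have hrepr : ∀ i, b.repr x i = b.repr y i := by
    intro i
    have h2 := congrArg (fun z => (b.baseChange ℚ).repr z i) h
    simp only [Module.Basis.baseChange_repr_tmul, smul_eq_mul, zsmul_eq_mul, mul_one] at h2
    exact_mod_cast h2
  exact b.repr.injective (Finsupp.ext hrepr)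

private lemma exists_nsmul_mem_span {Λ : Type*} [AddCommGroup Λ] [Module.Free ℤ Λ]
    (E : Set Λ) (l : Λ)
    (hl : ((1 : ℚ) ⊗ₜ[ℤ] l : ℚ ⊗[ℤ] Λ) ∈
      Submodule.span ℚ ((fun x : Λ => ((1 : ℚ) ⊗ₜ[ℤ] x : ℚ ⊗[ℤ] Λ)) '' E)) :
    ∃ n : ℕ, 0 < n ∧ (n : ℤ) • l ∈ Submodule.span ℤ E := by
  have key : ∀ x ∈ Submodule.span ℚ ((fun x : Λ => ((1:ℚ) ⊗ₜ[ℤ] x : ℚ ⊗[ℤ] Λ)) '' E),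
      ∃ n : ℕ, 0 < n ∧ ∃ m ∈ Submodule.span ℤ E, (n : ℚ) • x = (1:ℚ) ⊗ₜ[ℤ] m := by
    intro x hx
    induction hx using Submodule.span_induction with
    | mem x hx =>
        obtain ⟨e, he, rfl⟩ := hx
        exact ⟨1, one_pos, e, Submodule.subset_span he, by simp⟩
    | zero => exact ⟨1, one_pos, 0, Submodule.zero_mem _, by simp⟩
    | add x y hx hy ihx ihy =>
        obtain ⟨n₁, hn₁, m₁, hm₁, h₁⟩ := ihx
        obtain ⟨n₂, hn₂, m₂, hm₂, h₂⟩ := ihy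
        refine ⟨n₁ * n₂, Nat.mul_pos hn₁ hn₂, (n₂:ℤ) • m₁ + (n₁:ℤ) • m₂,
          Submodule.add_mem _ (Submodule.smul_mem _ _ hm₁) (Submodule.smul_mem _ _ hm₂), ?_⟩
        have e₁ : ((n₁ * n₂ : ℕ) : ℚ) • (x + y)
            = (n₂ : ℚ) • ((n₁ : ℚ) • x) + (n₁ : ℚ) • ((n₂ : ℚ) • y) := by
          rw [smul_add, smul_smul, smul_smul]
          push_cast
          ring_nf
        rw [e₁, h₁, h₂, TensorProduct.tmul_add, TensorProduct.tmul_smul,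
          TensorProduct.tmul_smul, ← Int.cast_smul_eq_zsmul ℚ (n₂:ℤ),
          ← Int.cast_smul_eq_zsmul ℚ (n₁:ℤ)]
        push_cast
        rfl
    | smul q x hx ih =>
        obtain ⟨n, hn, m, hm, h₁⟩ := ih
        refine ⟨n * q.den, Nat.mul_pos hn q.pos, q.num • m,
          Submodule.smul_mem _ _ hm, ?_⟩
        have hden : (q.den : ℚ) * q = (q.num : ℚ) := Rat.den_mul_eq_num q
        have e₁ : ((n * q.den : ℕ) : ℚ) • (q • x) = (q.num : ℚ) • ((n : ℚ) • x) := by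
          rw [smul_smul, smul_smul]
          push_cast
          rw [mul_assoc, hden]
          ring_nf
        rw [e₁, h₁, TensorProduct.tmul_smul, Int.cast_smul_eq_zsmul ℚ]
  obtain ⟨n, hn, m, hm, h₁⟩ := key _ hl
  have h2 : ((1:ℚ) ⊗ₜ[ℤ] ((n:ℤ) • l) : ℚ ⊗[ℤ] Λ) = (1:ℚ) ⊗ₜ[ℤ] m := by
    rw [TensorProduct.tmul_smul, ← h₁, ← Int.cast_smul_eq_zsmul ℚ]
    push_cast
    rfl
  refine ⟨n, hn, ?_⟩
  rw [tmul_one_injective h2]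
  exact hm

private lemma nsmul_mem_pos {Λ : Type*} [AddCommGroup Λ] {X : Set Λ}
    (hadd : X + X ⊆ X) (h0 : (0:Λ) ∈ X) {x : Λ} (hx : x ∈ X) :
    ∀ k : ℕ, (k : ℤ) • x ∈ X := by
  intro k
  induction k with
  | zero => simpa using h0
  | succ k ih =>
      have : ((k+1 : ℕ) : ℤ) • x = (k : ℤ) • x + x := by push_cast; rw [add_smul]; simp
      rw [this]
      exact hadd (Set.add_mem_add ih hx)

theorem rational_subspace_closed {Λ : Type*} [AddCommGroup Λ]
    [Module.Free ℤ Λ] [Module.Finite ℤ Λ]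
    (t : TopologicalSpace {X : Set Λ // IsPositiveSubset X})
    (ht : ∀ O : Set {X : Set Λ // IsPositiveSubset X},
      @IsOpen _ t O ↔ ∀ X ∈ O, ∃ E' : Finset Λ,
        ((X : Set Λ) ∩ (E' : Set Λ) = ∅) ∧
        {Y : {X : Set Λ // IsPositiveSubset X} | (Y : Set Λ) ∩ (E' : Set Λ) = ∅} ⊆ O)
    (E : Set Λ)
    -- `Λ(E) = Λ ∩ span_ℚ(E)`, computed inside `ℚ ⊗_ℤ Λ`
    (ΛE : Set Λ)
    (hΛE : ΛE = {l : Λ | ((1 : ℚ) ⊗ₜ[ℤ] l : ℚ ⊗[ℤ] Λ) ∈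
        Submodule.span ℚ ((fun x : Λ => ((1 : ℚ) ⊗ₜ[ℤ] x : ℚ ⊗[ℤ] Λ)) '' E)}) :
    {X : Set Λ | IsPositiveSubset X ∧ E ⊆ X ∩ (-X)} =
      {X : Set Λ | IsPositiveSubset X ∧ ΛE ⊆ X} ∧
    @IsClosed _ t
      {X : {X : Set Λ // IsPositiveSubset X} | E ⊆ (X : Set Λ) ∩ (-(X : Set Λ))} := by
  constructor
  · ext X
    simp only [Set.mem_setOf_eq]
    constructor
    · rintro ⟨hpos, hE⟩
      refine ⟨hpos, ?_⟩
      obtain ⟨hcover, hadd, H, hH⟩ := hpos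
      have hEH : E ⊆ (H : Set Λ) := by rw [hH]; exact hE
      have h0X : (0:Λ) ∈ X := by
        have : (0:Λ) ∈ (H : Set Λ) := H.zero_mem
        rw [hH] at this
        exact this.1
      intro l hl
      rw [hΛE] at hl
      obtain ⟨n, hn, hmem⟩ := exists_nsmul_mem_span E l hl
      have hspan : Submodule.span ℤ E ≤ AddSubgroup.toIntSubmodule H := by
        rw [Submodule.span_le]
        exact hEH
      have hnl : (n : ℤ) • l ∈ (H : Set Λ) := hspan hmem
      rw [hH] at hnl
      by_cases hlX : l ∈ X
      · exact hlX
      · have hnegl : -l ∈ X := by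
          have : l ∈ X ∪ (-X) := by rw [hcover]; trivial
          rcases this with h | h
          · exact absurd h hlX
          · exact Set.mem_neg.mp h
        have hsum : l = (n : ℤ) • l + ((n - 1 : ℕ) : ℤ) • (-l) := by
          rw [smul_neg, ← sub_eq_add_neg, ← sub_smul]
          rw [Nat.cast_sub hn]
          simp
        rw [hsum]
        exact hadd (Set.add_mem_add hnl.1 (nsmul_mem_pos hadd h0X hnegl (n-1)))
    · rintro ⟨hpos, hsub⟩
      refine ⟨hpos, ?_⟩
      intro e he
      have he1 : e ∈ ΛE := by
        rw [hΛE]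
        exact Submodule.subset_span ⟨e, he, rfl⟩
      have he2 : -e ∈ ΛE := by
        rw [hΛE]
        have : ((1:ℚ) ⊗ₜ[ℤ] (-e) : ℚ ⊗[ℤ] Λ) = -((1:ℚ) ⊗ₜ[ℤ] e) := by
          rw [TensorProduct.tmul_neg]
        rw [Set.mem_setOf_eq, this]
        exact Submodule.neg_mem _ (Submodule.subset_span ⟨e, he, rfl⟩)
      exact ⟨hsub he1, Set.mem_neg.mpr (hsub he2)⟩
  · rw [← @isOpen_compl_iff _ _ t, ht]
    intro X hX
    rw [Set.mem_compl_iff, Set.mem_setOf_eq, Set.not_subset] at hX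
    obtain ⟨e, heE, he⟩ := hX
    by_cases heX : e ∈ (X : Set Λ)
    · have hne : -e ∉ (X : Set Λ) := by
        intro h
        exact he ⟨heX, Set.mem_neg.mpr h⟩
      refine ⟨{-e}, ?_, ?_⟩
      · rw [Finset.coe_singleton, Set.inter_singleton_eq_empty]
        exact hne
      · intro Y hY
        simp only [Set.mem_setOf_eq, Finset.coe_singleton,
          Set.inter_singleton_eq_empty] at hY
        rw [Set.mem_compl_iff, Set.mem_setOf_eq, Set.not_subset]
        exact ⟨e, heE, fun h => hY (Set.mem_neg.mp h.2)⟩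
    · refine ⟨{e}, ?_, ?_⟩
      · rw [Finset.coe_singleton, Set.inter_singleton_eq_empty]
        exact heX
      · intro Y hY
        simp only [Set.mem_setOf_eq, Finset.coe_singleton,
          Set.inter_singleton_eq_empty] at hY
        rw [Set.mem_compl_iff, Set.mem_setOf_eq, Set.not_subset]
        exact ⟨e, heE, fun h => hY h.1⟩
end
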